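/- Let K be a field with absolute Galois group isomorphic to the profinite completion Ẑ of ℤ, let σ be a topological generator, let L be an extension of K with K algebraically closed in L, and let τ be an automorphism of the algebraic closure of L extending σ with fixed field M. Then for every n, if K_n is the unique degree-n extension of K, then MK_n is the unique degree-n extension of M. -/

import Mathlib

open Polynomial IntermediateField

/-- In a finite cyclic group, subgroups are determined by their cardinality. -/
theorem aux_cyclic_subgroup_unique {G : Type*} [Group G] [Fintype G] [IsCyclic G]
    (H H' : Subgroup G) (h : Nat.card H = Nat.card H') : H = H' := by
  classical
  have key : ∀ (J : Subgroup G) (d : ℕ), Nat.card J = d → 0 < d →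
      (J : Set G).toFinset = Finset.univ.filter (fun x : G => x ^ d = 1) := by
    intro J d hd hpos
    apply Finset.eq_of_subset_of_card_le
    · intro x hx
      simp only [Set.mem_toFinset, SetLike.mem_coe] at hx
      simp only [Finset.mem_filter, Finset.mem_univ, true_and]
      have h1 : ((⟨x, hx⟩ : J) : G) ^ d = 1 := by
        rw [← SubgroupClass.coe_pow, ← hd, pow_card_eq_one', OneMemClass.coe_one]
      exact h1
    · have hle := IsCyclic.card_pow_eq_one_le (α := G) (n := d) hpos
      have h2 : (J : Set G).toFinset.card = Nat.card J := by
        simp [Set.toFinset_card, Nat.card_eq_fintype_card]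
      omega
  have hpos : 0 < Nat.card H := Nat.card_pos
  have h3 : ((H : Set G).toFinset) = ((H' : Set G).toFinset) := by
    rw [key H (Nat.card H) rfl hpos, key H' (Nat.card H) h.symm hpos]
  rw [Set.toFinset_inj] at h3
  exact SetLike.ext' h3

/-- A field is perfect if it is the fixed field of an automorphism of an
algebraically closed extension. -/
theorem aux_perfect {F Ω : Type*} [Field F] [Field Ω] [Algebra F Ω] [IsAlgClosed Ω]
    (g : Ω ≃+* Ω) (hfixed : ∀ k : F, g (algebraMap F Ω k) = algebraMap F Ω k)
    (h : ∀ x : Ω, g x = x → ∃ k : F, algebraMap F Ω k = x) : PerfectField F := by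
  obtain ⟨p, hp⟩ := ExpChar.exists F
  cases hp with
  | zero => exact PerfectField.ofCharZero
  | prime hprime =>
    haveI : ExpChar F p := ExpChar.prime hprime
    haveI : ExpChar Ω p := expChar_of_injective_algebraMap (algebraMap F Ω).injective p
    haveI : Fact p.Prime := ⟨hprime⟩
    haveI : PerfectRing F p := by
      refine PerfectRing.ofSurjective F p fun k => ?_
      obtain ⟨x, hx⟩ := surjective_frobenius Ω p (algebraMap F Ω k)
      have hxp : x ^ p = algebraMap F Ω k := by rw [← hx, frobenius_def]
      have h1 : (g x) ^ p = x ^ p := by rw [← map_pow, hxp, hfixed]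
      have hgx : g x = x := frobenius_inj Ω p (by rw [frobenius_def, frobenius_def]; exact h1)
      obtain ⟨k', hk'⟩ := h x hgx
      refine ⟨k', (algebraMap F Ω).injective ?_⟩
      rw [frobenius_def, map_pow, hk', hxp]
    exact PerfectRing.toPerfectField F p

/-- Any element of `Ω` integral over `K` lies in the image of an algebraically
closed intermediate extension `Ωk`. -/
theorem aux_mem_range {K Ωk Ω : Type*} [Field K] [Field Ωk] [Field Ω]
    [Algebra K Ωk] [IsAlgClosed Ωk] [Algebra K Ω] [Algebra Ωk Ω]
    [IsScalarTower K Ωk Ω] {x : Ω} (hx : IsIntegral K x) :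
    ∃ y : Ωk, algebraMap Ωk Ω y = x := by
  set Q : K[X] := minpoly K x with hQ
  have hQmonic : Q.Monic := minpoly.monic hx
  set QΩk : Ωk[X] := Q.map (algebraMap K Ωk) with hQΩk
  have hsplits : QΩk.Splits :=
    IsAlgClosed.splits QΩk
  have hQΩkmonic : QΩk.Monic := hQmonic.map _
  have hfact : QΩk = (QΩk.roots.map (fun a => X - C a)).prod :=
    hsplits.eq_prod_roots_of_monic hQΩkmonic
  have heval : Polynomial.eval x (Q.map (algebraMap K Ω)) = 0 := by
    rw [Polynomial.eval_map, ← aeval_def]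
    exact minpoly.aeval K x
  have hmapeq : Q.map (algebraMap K Ω) = QΩk.map (algebraMap Ωk Ω) := by
    rw [hQΩk, Polynomial.map_map, ← IsScalarTower.algebraMap_eq]
  rw [hmapeq, hfact] at heval
  have heval2 : (QΩk.roots.map (fun a => x - algebraMap Ωk Ω a)).prod = 0 := by
    rw [Polynomial.map_multiset_prod, Multiset.map_map, eval_multiset_prod,
      Multiset.map_map] at heval
    simpa using heval
  rw [Multiset.prod_eq_zero_iff] at heval2
  obtain ⟨a, _, ha⟩ := Multiset.mem_map.mp heval2
  exact ⟨a, (sub_eq_zero.mp ha).symm⟩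

set_option synthInstance.maxHeartbeats 1000000 in
set_option maxHeartbeats 1000000 in
theorem aux_unique {F Ω : Type*} [Field F] [Field Ω] [Algebra F Ω]
    [IsGalois F Ω] [Algebra.IsAlgebraic F Ω] (g : Ω ≃ₐ[F] Ω)
    (hfix : ∀ x : Ω, g x = x → ∃ k : F, algebraMap F Ω k = x)
    {n : ℕ} (hn : 1 ≤ n) (E E' : IntermediateField F Ω)
    (hE : Module.finrank F E = n) (hE' : Module.finrank F E' = n) : E = E' := by
  classical
  haveI : FiniteDimensional F E := FiniteDimensional.of_finrank_pos (by omega)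
  haveI : FiniteDimensional F E' := FiniteDimensional.of_finrank_pos (by omega)
  haveI : FiniteDimensional F ↥(E ⊔ E') := IntermediateField.finiteDimensional_sup E E'
  set N : IntermediateField F Ω := normalClosure F ↥(E ⊔ E') Ω with hN
  haveI : FiniteDimensional F N := normalClosure.is_finiteDimensional F ↥(E ⊔ E') Ω
  haveI : Normal F N := normalClosure.normal F ↥(E ⊔ E') Ω
  haveI : Algebra.IsSeparable F ↥N :=
    Algebra.isSeparable_tower_bot_of_isSeparable F ↥N Ω
  haveI : IsGalois F ↥N := ⟨⟩
  have hEN : E ≤ N := le_trans le_sup_left (le_normalClosure (E ⊔ E'))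
  have hE'N : E' ≤ N := le_trans le_sup_right (le_normalClosure (E ⊔ E'))
  set Er : IntermediateField F ↥N := IntermediateField.restrict hEN with hEr
  set Er' : IntermediateField F ↥N := IntermediateField.restrict hE'N with hEr'
  have hfr : Module.finrank F (↥Er) = n := by
    rw [← hE]
    exact (LinearEquiv.finrank_eq (IntermediateField.restrict_algEquiv hEN).toLinearEquiv).symm
  have hfr' : Module.finrank F (↥Er') = n := by
    rw [← hE']
    exact (LinearEquiv.finrank_eq (IntermediateField.restrict_algEquiv hE'N).toLinearEquiv).symm
  -- the restricted automorphism generates the Galois group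
  set gN : ↥N ≃ₐ[F] ↥N := g.restrictNormal ↥N with hgN
  have hfixN : IntermediateField.fixedField (Subgroup.zpowers gN) = ⊥ := by
    apply le_antisymm
    · rintro x hx
      have hgx : gN x = x := hx ⟨gN, Subgroup.mem_zpowers gN⟩
      have hcomm := AlgEquiv.restrictNormal_commutes g ↥N x
      have : g ((algebraMap ↥N Ω) x) = (algebraMap ↥N Ω) x := by
        rw [← hcomm, hgx]
      obtain ⟨k, hk⟩ := hfix _ this
      rw [IntermediateField.mem_bot]
      have h5 : algebraMap ↥N Ω (algebraMap F ↥N k) = algebraMap ↥N Ω x := by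
        rw [← IsScalarTower.algebraMap_apply F ↥N Ω k, hk]
      exact ⟨k, Subtype.val_injective h5⟩
    · exact bot_le
  have htop : Subgroup.zpowers gN = ⊤ := by
    rw [← IntermediateField.fixingSubgroup_fixedField (Subgroup.zpowers gN), hfixN]
    ext x
    simp only [Subgroup.mem_top, iff_true]
    rw [IntermediateField.mem_fixingSubgroup_iff]
    rintro y hy
    rw [IntermediateField.mem_bot] at hy
    obtain ⟨k, rfl⟩ := hy
    exact x.commutes k
  haveI : IsCyclic (↥N ≃ₐ[F] ↥N) := ⟨gN, fun x => by
    show x ∈ Subgroup.zpowers gN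
    rw [htop]; exact Subgroup.mem_top x⟩
  -- compare fixing subgroups
  have hcard : ∀ (J : IntermediateField F ↥N), Module.finrank F (↥J) = n →
      Nat.card J.fixingSubgroup = Module.finrank F ↥N / n := by
    intro J hJ
    have h1 : Module.finrank (↥(IntermediateField.fixedField J.fixingSubgroup)) (↥N)
        = Nat.card J.fixingSubgroup :=
      IntermediateField.finrank_fixedField_eq_card J.fixingSubgroup
    rw [IsGalois.fixedField_fixingSubgroup J] at h1
    have h2 : Module.finrank F (↥J) * Module.finrank (↥J) (↥N) = Module.finrank F (↥N) :=
      Module.finrank_mul_finrank F (↥J) (↥N)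
    rw [← h1, ← h2, hJ,
      Nat.mul_div_cancel_left _ (show 0 < n by omega)]
  have hHH' : (Er.fixingSubgroup) = (Er'.fixingSubgroup) := by
    apply aux_cyclic_subgroup_unique
    rw [hcard Er hfr, hcard Er' hfr']
  have hErEr' : Er = Er' := by
    rw [← IsGalois.fixedField_fixingSubgroup Er, ← IsGalois.fixedField_fixingSubgroup Er', hHH']
  have := congrArg IntermediateField.lift hErEr'
  rwa [IntermediateField.lift_restrict, IntermediateField.lift_restrict] at this

set_option synthInstance.maxHeartbeats 400000 in
set_option maxHeartbeats 1000000 in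
/-- The degree of `F(a)` over `F` equals the degree of `K(a)` over `K` when the
coefficients can be descended to `K`. -/
theorem aux_finrank {K Ωk F Ω : Type*} [Field K] [Field Ωk] [Field F] [Field Ω]
    [Algebra K Ωk] [IsAlgClosed Ωk] [Algebra K Ω] [Algebra Ωk Ω] [IsScalarTower K Ωk Ω]
    [Algebra K F] [Algebra F Ω] [IsScalarTower K F Ω] [IsAlgClosed Ω]
    (hrange : ∀ x : Ω, (∃ y : Ωk, algebraMap Ωk Ω y = x) →
        (∃ m : F, algebraMap F Ω m = x) → ∃ k : K, algebraMap K Ω k = x)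
    (a : Ωk) (ha : IsIntegral K a) :
    Module.finrank F (IntermediateField.adjoin F {algebraMap Ωk Ω a}) =
      Module.finrank K (IntermediateField.adjoin K {a}) := by
  classical
  set aa := algebraMap Ωk Ω a with haadef
  have haaK : IsIntegral K aa := ha.map (IsScalarTower.toAlgHom K Ωk Ω)
  have haaF : IsIntegral F aa := haaK.tower_top
  rw [IntermediateField.adjoin.finrank haaF, IntermediateField.adjoin.finrank ha]
  have hmineq : minpoly K aa = minpoly K a :=
    minpoly.algHom_eq (IsScalarTower.toAlgHom K Ωk Ω)
      (algebraMap Ωk Ω).injective a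
  rw [← hmineq]
  set P := minpoly F aa with hPdef
  set Q := minpoly K aa with hQdef
  have hQne : Q ≠ 0 := minpoly.ne_zero haaK
  have hPmonic : P.Monic := minpoly.monic haaF
  have hQmonic : Q.Monic := minpoly.monic haaK
  have hdvd : P ∣ Q.map (algebraMap K F) := minpoly.dvd_map_of_isScalarTower K F aa
  have hle : P.natDegree ≤ Q.natDegree := by
    have h0 := Polynomial.natDegree_le_of_dvd hdvd
      ((Polynomial.map_ne_zero_iff (algebraMap K F).injective).mpr hQne)
    rwa [Polynomial.natDegree_map] at h0
  refine le_antisymm hle ?_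
  set PΩ := P.map (algebraMap F Ω) with hPΩ
  have hPΩmonic : PΩ.Monic := hPmonic.map _
  have hPΩdvd : PΩ ∣ Q.map (algebraMap K Ω) := by
    have h1 : P.map (algebraMap F Ω) ∣ (Q.map (algebraMap K F)).map (algebraMap F Ω) :=
      Polynomial.map_dvd _ hdvd
    rwa [Polynomial.map_map, ← IsScalarTower.algebraMap_eq] at h1
  have hQΩne : Q.map (algebraMap K Ω) ≠ 0 :=
    (Polynomial.map_ne_zero_iff (algebraMap K Ω).injective).mpr hQne
  have hroots : ∀ r ∈ PΩ.roots, ∃ y : Ωk, algebraMap Ωk Ω y = r := by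
    intro r hr
    have hrQ : r ∈ (Q.map (algebraMap K Ω)).roots :=
      Multiset.mem_of_le (Polynomial.roots.le_of_dvd hQΩne hPΩdvd) hr
    have hint : IsIntegral K r := by
      refine ⟨Q, hQmonic, ?_⟩
      have h2 := Polynomial.isRoot_of_mem_roots hrQ
      rwa [Polynomial.IsRoot.def, Polynomial.eval_map] at h2
    exact aux_mem_range hint
  have hsplits : PΩ.Splits :=
    IsAlgClosed.splits PΩ
  have hfact : PΩ = (PΩ.roots.map (fun r => X - C r)).prod :=
    hsplits.eq_prod_roots_of_monic hPΩmonic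
  obtain ⟨t, ht⟩ : ∃ t : Multiset Ωk, t.map (algebraMap Ωk Ω) = PΩ.roots := by
    refine ⟨PΩ.roots.attach.map (fun r => Classical.choose (hroots r.1 r.2)), ?_⟩
    rw [Multiset.map_map]
    have h6 : PΩ.roots.attach.map
        ((fun y => algebraMap Ωk Ω y) ∘ (fun r => Classical.choose (hroots r.1 r.2)))
        = PΩ.roots.attach.map (fun r => r.1) :=
      Multiset.map_congr rfl (fun r _ => Classical.choose_spec (hroots r.1 r.2))
    rw [h6, Multiset.attach_map_val]
  have hcoeffΩk : ∀ i, ∃ y : Ωk, algebraMap Ωk Ω y = PΩ.coeff i := by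
    intro i
    have hmap : ((t.map (fun s => X - C s)).prod).map (algebraMap Ωk Ω) = PΩ := by
      rw [Polynomial.map_multiset_prod, Multiset.map_map]
      conv_rhs => rw [hfact, ← ht, Multiset.map_map]
      apply congrArg Multiset.prod
      apply Multiset.map_congr rfl
      intro s _
      simp
    exact ⟨_, by rw [← hmap, Polynomial.coeff_map]⟩
  have hlift : PΩ ∈ Polynomial.lifts (algebraMap K Ω) := by
    rw [Polynomial.lifts_iff_coeff_lifts]
    intro i
    exact hrange _ (hcoeffΩk i) ⟨P.coeff i, (Polynomial.coeff_map _ _).symm⟩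
  obtain ⟨Pk, hPk, hdeg, hPkmonic⟩ :=
    Polynomial.lifts_and_degree_eq_and_monic hlift hPΩmonic
  have haev : Polynomial.aeval aa Pk = 0 := by
    rw [Polynomial.aeval_def, ← Polynomial.eval_map, hPk, hPΩ, Polynomial.eval_map,
      ← Polynomial.aeval_def]
    exact minpoly.aeval F aa
  have hdvd2 : Q ∣ Pk := minpoly.dvd K aa haev
  have h3 := Polynomial.natDegree_le_of_dvd hdvd2 hPkmonic.ne_zero
  have h4 : Pk.natDegree = P.natDegree := by
    have h1 : Pk.natDegree = PΩ.natDegree := by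
      rw [← hPk, Polynomial.natDegree_map]
    rw [h1, hPΩ, Polynomial.natDegree_map]
  omega

set_option synthInstance.maxHeartbeats 1000000 in
set_option maxHeartbeats 1000000 in
theorem compositum_is_unique_extension
    (K Ktilde L Ltilde : Type*) [Field K] [Field Ktilde] [Field L] [Field Ltilde]
    [Algebra K Ktilde] [IsAlgClosure K Ktilde]
    [Algebra K L]
    [Algebra L Ltilde] [IsAlgClosure L Ltilde]
    [Algebra K Ltilde] [Algebra Ktilde Ltilde]
    [IsScalarTower K L Ltilde] [IsScalarTower K Ktilde Ltilde]
    (huniq : ∀ n : ℕ, 1 ≤ n →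
      ∃! E : IntermediateField K Ktilde, Module.finrank K E = n)
    (σ : Ktilde ≃ₐ[K] Ktilde)
    (hσ : ∀ x : Ktilde, σ x = x → ∃ k : K, algebraMap K Ktilde k = x)
    (hreg : ∀ x : L, IsIntegral K x → ∃ k : K, algebraMap K L k = x)
    (τ : Ltilde ≃ₐ[L] Ltilde)
    (hτσ : ∀ x : Ktilde, τ (algebraMap Ktilde Ltilde x) = algebraMap Ktilde Ltilde (σ x))
    (M : IntermediateField L Ltilde)
    (hM : ∀ x : Ltilde, x ∈ M ↔ τ x = x) :
    ∀ n : ℕ, 1 ≤ n → ∀ Kn : IntermediateField K Ktilde, Module.finrank K Kn = n →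
      ∀ E : IntermediateField M Ltilde,
        Module.finrank M E = n ↔
          E = IntermediateField.adjoin M
            (algebraMap Ktilde Ltilde '' (Kn : Set Ktilde)) := by
  intro n hn Kn hKn E
  -- instances
  haveI : IsAlgClosed Ktilde := IsAlgClosure.isAlgClosed K
  haveI : IsAlgClosed Ltilde := IsAlgClosure.isAlgClosed L
  haveI : Algebra.IsAlgebraic K Ktilde := IsAlgClosure.isAlgebraic
  haveI : Algebra.IsAlgebraic L Ltilde := IsAlgClosure.isAlgebraic
  haveI : Algebra.IsIntegral K Ktilde := Algebra.IsAlgebraic.isIntegral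
  haveI : PerfectField K := aux_perfect (σ : Ktilde ≃+* Ktilde) (fun k => σ.commutes k) hσ
  haveI : Algebra.IsSeparable K Ktilde := inferInstance
  haveI : Algebra.IsAlgebraic ↥M Ltilde := Algebra.IsAlgebraic.tower_top (K := L) ↥M
  haveI : PerfectField ↥M := aux_perfect (τ : Ltilde ≃+* Ltilde)
      (fun m => (hM m).1 m.2) (fun x hx => ⟨⟨x, (hM x).2 hx⟩, rfl⟩)
  haveI : IsAlgClosure ↥M Ltilde := ⟨inferInstance, inferInstance⟩
  haveI : Normal ↥M Ltilde := IsAlgClosure.normal ↥M Ltilde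
  haveI : Algebra.IsSeparable ↥M Ltilde := inferInstance
  haveI : IsGalois ↥M Ltilde := ⟨⟩
  haveI : IsScalarTower K ↥M Ltilde := IsScalarTower.of_algebraMap_eq' rfl
  -- the automorphism over M
  let τM : Ltilde ≃ₐ[↥M] Ltilde :=
    { τ.toRingEquiv with commutes' := fun m => (hM m).1 m.2 }
  have hfixM : ∀ x : Ltilde, τM x = x → ∃ k : ↥M, algebraMap ↥M Ltilde k = x :=
    fun x hx => ⟨⟨x, (hM x).2 hx⟩, rfl⟩
  -- primitive element for Kn
  haveI : FiniteDimensional K Kn := FiniteDimensional.of_finrank_pos (by omega)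
  haveI : Algebra.IsSeparable K ↥Kn :=
    Algebra.isSeparable_tower_bot_of_isSeparable K ↥Kn Ktilde
  obtain ⟨α, hα⟩ := Field.exists_primitive_element K ↥Kn
  have hKa : IntermediateField.adjoin K {(α : Ktilde)} = Kn := by
    have h1 := congrArg (IntermediateField.lift) hα
    rwa [IntermediateField.lift_adjoin, IntermediateField.lift_top,
      Set.image_singleton] at h1
  set aa : Ktilde := (α : Ktilde) with haadef
  set ab : Ltilde := algebraMap Ktilde Ltilde aa with habdef
  set E₀ : IntermediateField ↥M Ltilde :=
    IntermediateField.adjoin ↥M (algebraMap Ktilde Ltilde '' (Kn : Set Ktilde)) with hE₀def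
  -- E₀ = M(ab)
  have hE0 : E₀ = IntermediateField.adjoin ↥M {ab} := by
    apply le_antisymm
    · rw [hE₀def, IntermediateField.adjoin_le_iff]
      rintro x ⟨y, hy, rfl⟩
      rw [← hKa] at hy
      have himg : (IntermediateField.adjoin K {aa}).map (IsScalarTower.toAlgHom K Ktilde Ltilde)
          = IntermediateField.adjoin K {ab} := by
        rw [IntermediateField.adjoin_map, Set.image_singleton]
        rfl
      have hy2 : algebraMap Ktilde Ltilde y ∈ IntermediateField.adjoin K {ab} := by
        rw [← himg]
        exact ⟨y, hy, rfl⟩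
      have hle : IntermediateField.adjoin K {ab} ≤
          (IntermediateField.adjoin ↥M {ab}).restrictScalars K := by
        rw [IntermediateField.adjoin_le_iff]
        intro z hz
        rw [Set.mem_singleton_iff] at hz
        subst hz
        exact IntermediateField.mem_adjoin_simple_self ↥M ab
      exact hle hy2
    · rw [IntermediateField.adjoin_le_iff]
      intro z hz
      rw [Set.mem_singleton_iff] at hz
      subst hz
      exact IntermediateField.subset_adjoin ↥M _ ⟨aa, α.2, rfl⟩
  -- degree of E₀
  have haaint : IsIntegral K aa := Algebra.IsIntegral.isIntegral aa
  have hfinE0 : Module.finrank ↥M E₀ = n := by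
    rw [hE0]
    have hrange : ∀ x : Ltilde, (∃ y : Ktilde, algebraMap Ktilde Ltilde y = x) →
        (∃ m : ↥M, algebraMap ↥M Ltilde m = x) → ∃ k : K, algebraMap K Ltilde k = x := by
      rintro x ⟨y, rfl⟩ ⟨m, hm⟩
      have hxM : algebraMap Ktilde Ltilde y ∈ M := by
        rw [← hm]
        exact SetLike.coe_mem m
      have hτx : τ (algebraMap Ktilde Ltilde y) = algebraMap Ktilde Ltilde y := (hM _).1 hxM
      rw [hτσ y] at hτx
      have hσy : σ y = y := (algebraMap Ktilde Ltilde).injective hτx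
      obtain ⟨k, hk⟩ := hσ y hσy
      exact ⟨k, by rw [IsScalarTower.algebraMap_apply K Ktilde Ltilde, hk]⟩
    have h2 := aux_finrank (K := K) (Ωk := Ktilde) (F := ↥M) (Ω := Ltilde) hrange aa haaint
    rw [h2, hKa, hKn]
  constructor
  · intro hE
    exact aux_unique τM hfixM hn E E₀ hE hfinE0
  · intro hE
    rw [hE]
    exact hfinE0
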